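/- Let φ : ℝ → ℝ be convex and differentiable at 0 with φ'(0) < 0. Define the surrogate risk of t ∈ ℝ^K by Φ(t) = Σ_{a ∈ {−1,1}^K} w(a)·(1/K)·Σ_{k=1}^K φ(a_k·t_k) = (1/K)·Σ_{k=1}^K [ w⁺_k·φ(t_k) + w⁻_k·φ(−t_k) ], where w⁺_k = Σ_{a : a_k = 1} w(a) and w⁻_k = Σ_{a : a_k = −1} w(a). If t* ∈ ℝ^K is a global minimizer of Φ over ℝ^K, then the decision f ∈ {−1,1}^K given by f_k = 1 if t*_k ≥ 0 and f_k = −1 if t*_k < 0 satisfies RH(f) = min_{d ∈ {−1,1}^K} RH(d). (Multi-label consistency of the surrogate loss, pointwise form of Theorem 3.) -/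

import Mathlib

open Finset

noncomputable section

/-- The cube `{-1,1}^K` as a finite set of real vectors. -/
def cube (K : ℕ) : Finset (Fin K → ℝ) :=
  Finset.univ.image (fun b : Fin K → Bool => fun k => if b k then 1 else -1)

lemma cube_nonempty (K : ℕ) : (cube K).Nonempty :=
  Finset.Nonempty.image Finset.univ_nonempty _

lemma univ_fin_nonempty {K : ℕ} (hK : 1 ≤ K) :
    (Finset.univ : Finset (Fin K)).Nonempty :=
  ⟨⟨0, hK⟩, Finset.mem_univ _⟩

/-- Outcome weighted 0-1 risk at a fixed covariate value:
`R01(d) = Σ_{a ∈ {-1,1}^K} w(a) · 1{a ≠ d}`. -/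
def R01 {K : ℕ} (w : (Fin K → ℝ) → ℝ) (d : Fin K → ℝ) : ℝ :=
  ∑ a ∈ cube K, w a * (if a = d then 0 else 1)

/-- Outcome weighted Hamming risk at a fixed covariate value:
`RH(d) = Σ_{a ∈ {-1,1}^K} w(a) · (1/K) Σ_k 1{a_k ≠ d_k}`. -/
def RH {K : ℕ} (w : (Fin K → ℝ) → ℝ) (d : Fin K → ℝ) : ℝ :=
  ∑ a ∈ cube K, w a * ((1 / (K : ℝ)) * ∑ k : Fin K, if a k = d k then 0 else 1)

/-- Contrast of treatment `k`:
`c_k(w) = Σ_{a : a_k = 1} w(a) - Σ_{a : a_k = -1} w(a)`. -/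
def contrast {K : ℕ} (w : (Fin K → ℝ) → ℝ) (k : Fin K) : ℝ :=
  ∑ a ∈ (cube K).filter (fun a => a k = 1), w a
    - ∑ a ∈ (cube K).filter (fun a => a k = -1), w a

/-- The surrogate Hamming risk
`Φ(t) = Σ_a w(a) · (1/K) Σ_k φ(a_k t_k)`. -/
def surrogateRisk {K : ℕ} (w : (Fin K → ℝ) → ℝ) (φ : ℝ → ℝ) (t : Fin K → ℝ) : ℝ :=
  ∑ a ∈ cube K, w a * ((1 / (K : ℝ)) * ∑ k : Fin K, φ (a k * t k))

/-! ### Auxiliary lemmas -/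

lemma mem_cube_pm {K : ℕ} {a : Fin K → ℝ} (ha : a ∈ cube K) (k : Fin K) :
    a k = 1 ∨ a k = -1 := by
  simp only [cube, Finset.mem_image, Finset.mem_univ, true_and] at ha
  obtain ⟨b, rfl⟩ := ha
  by_cases h : b k <;> simp [h]

/-- Tangent line inequality for a convex function. -/
lemma tangent_line {φ : ℝ → ℝ} (hconv : ConvexOn ℝ Set.univ φ)
    (hdiff : DifferentiableAt ℝ φ 0) (x : ℝ) :
    φ 0 + deriv φ 0 * x ≤ φ x := by
  rcases lt_trichotomy x 0 with h | h | h
  · have hs := hconv.slope_le_deriv (Set.mem_univ x) (Set.mem_univ 0) h hdiff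
    rw [slope_def_field] at hs
    have hx : (0 : ℝ) < 0 - x := by linarith
    rw [div_le_iff₀ hx] at hs
    nlinarith
  · simp [h]
  · have hs := hconv.deriv_le_slope (Set.mem_univ 0) (Set.mem_univ x) h hdiff
    rw [slope_def_field] at hs
    have hx : (0 : ℝ) < x - 0 := by linarith
    rw [le_div_iff₀ hx] at hs
    nlinarith

lemma sum_cube_split {K : ℕ} (k : Fin K) (F : (Fin K → ℝ) → ℝ) :
    ∑ a ∈ cube K, F a
      = ∑ a ∈ (cube K).filter (fun a => a k = 1), F a
        + ∑ a ∈ (cube K).filter (fun a => a k = -1), F a := by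
  rw [← Finset.sum_filter_add_sum_filter_not (cube K) (fun a => a k = 1)]
  congr 1
  apply Finset.sum_congr _ (fun _ _ => rfl)
  apply Finset.filter_congr
  intro a ha
  rcases mem_cube_pm ha k with h | h <;> simp [h] <;> norm_num

lemma sum_cube_phi {K : ℕ} (w : (Fin K → ℝ) → ℝ) (φ : ℝ → ℝ) (k : Fin K) (s : ℝ) :
    ∑ a ∈ cube K, w a * φ (a k * s)
      = (∑ a ∈ (cube K).filter (fun a => a k = 1), w a) * φ s
        + (∑ a ∈ (cube K).filter (fun a => a k = -1), w a) * φ (-s) := by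
  rw [sum_cube_split k, Finset.sum_mul, Finset.sum_mul]
  congr 1
  · refine Finset.sum_congr rfl fun a ha => ?_
    have h : a k = 1 := (Finset.mem_filter.mp ha).2
    rw [h, one_mul]
  · refine Finset.sum_congr rfl fun a ha => ?_
    have h : a k = -1 := (Finset.mem_filter.mp ha).2
    rw [h, neg_one_mul]

lemma sum_swap_form {K : ℕ} (w : (Fin K → ℝ) → ℝ) (F : (Fin K → ℝ) → Fin K → ℝ) :
    ∑ a ∈ cube K, w a * ((1 / (K : ℝ)) * ∑ k : Fin K, F a k)
      = (1 / (K : ℝ)) * ∑ k : Fin K, ∑ a ∈ cube K, w a * F a k := by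
  calc ∑ a ∈ cube K, w a * ((1 / (K : ℝ)) * ∑ k : Fin K, F a k)
      = ∑ a ∈ cube K, ∑ k : Fin K, (1 / (K : ℝ)) * (w a * F a k) := by
        refine Finset.sum_congr rfl fun a _ => ?_
        rw [mul_left_comm, Finset.mul_sum, Finset.mul_sum]
    _ = ∑ k : Fin K, ∑ a ∈ cube K, (1 / (K : ℝ)) * (w a * F a k) := Finset.sum_comm
    _ = (1 / (K : ℝ)) * ∑ k : Fin K, ∑ a ∈ cube K, w a * F a k := by
        rw [Finset.mul_sum]
        exact Finset.sum_congr rfl fun k _ => (Finset.mul_sum _ _ _).symm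

/-- Multi-label consistency of the surrogate loss (pointwise form of
Theorem 3). -/
theorem surrogate_consistency_pointwise
    (K : ℕ) (hK : 1 ≤ K) (w : (Fin K → ℝ) → ℝ)
    (hw : ∀ a ∈ cube K, 0 ≤ w a)
    (φ : ℝ → ℝ) (hconv : ConvexOn ℝ Set.univ φ)
    (hdiff : DifferentiableAt ℝ φ 0) (hderiv : deriv φ 0 < 0)
    (tstar : Fin K → ℝ)
    (hmin : ∀ t : Fin K → ℝ, surrogateRisk w φ tstar ≤ surrogateRisk w φ t)
    (f : Fin K → ℝ)
    (hf : ∀ k : Fin K, f k = if 0 ≤ tstar k then (1 : ℝ) else -1) :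
    ∀ d ∈ cube K, RH w f ≤ RH w d := by
  intro d hd
  have hKpos : (0 : ℝ) < (K : ℝ) := by exact_mod_cast hK
  have hKinv : (0 : ℝ) < 1 / (K : ℝ) := by positivity
  set dφ := deriv φ 0 with hdφ
  -- weights
  set Wp : Fin K → ℝ := fun k => ∑ a ∈ (cube K).filter (fun a => a k = 1), w a with hWp
  set Wm : Fin K → ℝ := fun k => ∑ a ∈ (cube K).filter (fun a => a k = -1), w a with hWm
  have hWp0 : ∀ k, 0 ≤ Wp k := fun k =>
    Finset.sum_nonneg fun a ha => hw a (Finset.mem_of_mem_filter a ha)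
  have hWm0 : ∀ k, 0 ≤ Wm k := fun k =>
    Finset.sum_nonneg fun a ha => hw a (Finset.mem_of_mem_filter a ha)
  -- coordinatewise minimality of the surrogate
  have hsur : ∀ t : Fin K → ℝ, surrogateRisk w φ t
      = (1 / (K : ℝ)) * ∑ k : Fin K, (Wp k * φ (t k) + Wm k * φ (-(t k))) := by
    intro t
    rw [surrogateRisk, sum_swap_form w (fun a k => φ (a k * t k))]
    congr 1
    exact Finset.sum_congr rfl fun k _ => sum_cube_phi w φ k (t k)
  have key : ∀ (k : Fin K) (s : ℝ),
      Wp k * φ (tstar k) + Wm k * φ (-(tstar k)) ≤ Wp k * φ s + Wm k * φ (-s) := by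
    intro k s
    have h := hmin (Function.update tstar k s)
    rw [hsur, hsur, mul_le_mul_iff_right₀ hKinv] at h
    rw [← Finset.sum_erase_add _ _ (Finset.mem_univ k),
        ← Finset.sum_erase_add _ _ (Finset.mem_univ k)] at h
    have e2 : ∑ k' ∈ univ.erase k,
        (Wp k' * φ (Function.update tstar k s k') + Wm k' * φ (-(Function.update tstar k s k')))
        = ∑ k' ∈ univ.erase k, (Wp k' * φ (tstar k') + Wm k' * φ (-(tstar k'))) := by
      refine Finset.sum_congr rfl fun k' hk' => ?_
      rw [Function.update_of_ne (Finset.ne_of_mem_erase hk')]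
    rw [e2, Function.update_self] at h
    linarith
  -- tangent line
  have htan : ∀ x : ℝ, φ 0 + dφ * x ≤ φ x := tangent_line hconv hdiff
  -- sign lemmas
  have sign_pos : ∀ k, Wm k < Wp k → 0 ≤ tstar k := by
    intro k hc
    by_contra hneg
    push_neg at hneg
    have h0 := key k 0
    rw [neg_zero] at h0
    have h1 := htan (tstar k)
    have h2 := htan (-(tstar k))
    have h3 : 0 ≤ Wp k := hWp0 k
    have h4 : 0 ≤ Wm k := hWm0 k
    nlinarith [mul_le_mul_of_nonneg_left h1 h3, mul_le_mul_of_nonneg_left h2 h4,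
      mul_pos (sub_pos.mpr hc) (mul_pos_of_neg_of_neg hderiv hneg)]
  have sign_neg : ∀ k, Wp k < Wm k → tstar k < 0 := by
    intro k hc
    by_contra hpos
    push_neg at hpos
    -- 0 is a global minimum of G k
    have hmin0 : ∀ s : ℝ, Wp k * φ 0 + Wm k * φ (-0) ≤ Wp k * φ s + Wm k * φ (-s) := by
      intro s
      refine le_trans ?_ (key k s)
      have h1 := htan (tstar k)
      have h2 := htan (-(tstar k))
      have h3 : 0 ≤ Wp k := hWp0 k
      have h4 : 0 ≤ Wm k := hWm0 k
      rw [neg_zero]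
      nlinarith [mul_le_mul_of_nonneg_left h1 h3, mul_le_mul_of_nonneg_left h2 h4,
        mul_nonneg (le_of_lt (mul_pos_of_neg_of_neg (sub_neg.mpr hc) hderiv)) hpos]
    have hlocal : IsLocalMin (fun s => Wp k * φ s + Wm k * φ (-s)) 0 :=
      Filter.Eventually.of_forall hmin0
    have hφ0 : HasDerivAt φ dφ 0 := hdiff.hasDerivAt
    have hφneg : HasDerivAt (fun s : ℝ => φ (-s)) (dφ * (-1)) 0 := by
      have h0 : HasDerivAt φ dφ (-(0:ℝ)) := by rwa [neg_zero]
      exact h0.comp 0 (hasDerivAt_neg 0)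
    have hG : HasDerivAt (fun s => Wp k * φ s + Wm k * φ (-s))
        (Wp k * dφ + Wm k * (dφ * (-1))) 0 :=
      (hφ0.const_mul (Wp k)).add (hφneg.const_mul (Wm k))
    have hzero := hlocal.hasDerivAt_eq_zero hG
    nlinarith [mul_pos_of_neg_of_neg (sub_neg.mpr hc) hderiv]
  -- Hamming risk decomposition
  have hRH : ∀ x : Fin K → ℝ, RH w x
      = (1 / (K : ℝ)) * ∑ k : Fin K, ∑ a ∈ cube K, w a * (if a k = x k then 0 else 1) := by
    intro x
    rw [RH, sum_swap_form w (fun a k => if a k = x k then (0:ℝ) else 1)]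
  -- computation of the per-coordinate terms
  have hT1 : ∀ (x : Fin K → ℝ) (k : Fin K), x k = 1 →
      ∑ a ∈ cube K, w a * (if a k = x k then (0:ℝ) else 1) = Wm k := by
    intro x k hx
    rw [sum_cube_split k]
    have e1 : ∑ a ∈ (cube K).filter (fun a => a k = 1), w a * (if a k = x k then (0:ℝ) else 1) = 0 := by
      refine Finset.sum_eq_zero fun a ha => ?_
      have h : a k = 1 := (Finset.mem_filter.mp ha).2
      rw [h, hx]; simp
    have e2 : ∑ a ∈ (cube K).filter (fun a => a k = -1), w a * (if a k = x k then (0:ℝ) else 1) = Wm k := by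
      refine Finset.sum_congr rfl fun a ha => ?_
      have h : a k = -1 := (Finset.mem_filter.mp ha).2
      rw [h, hx]; norm_num
    rw [e1, e2, zero_add]
  have hT2 : ∀ (x : Fin K → ℝ) (k : Fin K), x k = -1 →
      ∑ a ∈ cube K, w a * (if a k = x k then (0:ℝ) else 1) = Wp k := by
    intro x k hx
    rw [sum_cube_split k]
    have e1 : ∑ a ∈ (cube K).filter (fun a => a k = 1), w a * (if a k = x k then (0:ℝ) else 1) = Wp k := by
      refine Finset.sum_congr rfl fun a ha => ?_
      have h : a k = 1 := (Finset.mem_filter.mp ha).2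
      rw [h, hx]; norm_num
    have e2 : ∑ a ∈ (cube K).filter (fun a => a k = -1), w a * (if a k = x k then (0:ℝ) else 1) = 0 := by
      refine Finset.sum_eq_zero fun a ha => ?_
      have h : a k = -1 := (Finset.mem_filter.mp ha).2
      rw [h, hx]; simp
    rw [e1, e2, add_zero]
  -- conclude
  rw [hRH f, hRH d]
  refine mul_le_mul_of_nonneg_left (Finset.sum_le_sum fun k _ => ?_) (le_of_lt hKinv)
  have hfcase : (f k = 1 ∧ 0 ≤ tstar k) ∨ (f k = -1 ∧ tstar k < 0) := by
    by_cases h : 0 ≤ tstar k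
    · left; exact ⟨by rw [hf k, if_pos h], h⟩
    · right; exact ⟨by rw [hf k, if_neg h], lt_of_not_ge h⟩
  rcases mem_cube_pm hd k with hdk | hdk
  · rw [hT1 d k hdk]
    rcases hfcase with ⟨hfk, ht⟩ | ⟨hfk, ht⟩
    · rw [hT1 f k hfk]
    · rw [hT2 f k hfk]
      by_contra hlt
      push_neg at hlt
      exact absurd (sign_pos k hlt) (not_le.mpr ht)
  · rw [hT2 d k hdk]
    rcases hfcase with ⟨hfk, ht⟩ | ⟨hfk, ht⟩
    · rw [hT1 f k hfk]
      by_contra hlt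
      push_neg at hlt
      exact absurd (sign_neg k hlt) (not_lt.mpr ht)
    · rw [hT2 f k hfk]
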